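/- arXiv:2008.06790 — 5 statements merged into one kernel-verified Lean document; each statement's English description precedes it below -/
import Mathlib

section
/- Determinizing a reversed DFA yields a minimal DFA after removing unreachable states: if A is a DFA all of whose states are reachable from the initial state, then the DFA obtained by applying the subset construction to reverse(A) and restricting to subsets reachable from the initial subset Acc(A) is the minimal DFA for the language L(A)^R. Minimality means: all states are reachable, and no two distinct states accept the same residual language. -/
/-- The reversal of a DFA: the NFA with initial states `Acc`, accepting states `{s₀}`,
and reversed transitions. -/
def dfaRev {α σ : Type*} (A : DFA α σ) : NFA α σ where
  step s a := {s' | A.step s' a = s}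
  start := A.accept
  accept := {A.start}

/-- The set of states of a DFA reachable from the initial state by some word. -/
def reach {α σ : Type*} (D : DFA α σ) : Set σ := {q | ∃ w : List α, D.evalFrom D.start w = q}

/-- The DFA obtained by removing all states unreachable from the initial state. -/
def restrictReach {α σ : Type*} (D : DFA α σ) : DFA α (reach D) where
  step q a := ⟨D.step q.1 a, by
    obtain ⟨w, hw⟩ := q.2
    exact ⟨w ++ [a], by rw [DFA.evalFrom_append_singleton, hw]⟩⟩
  start := ⟨D.start, ⟨[], rfl⟩⟩
  accept := {q | q.1 ∈ D.accept}

/-- A DFA is minimal if every state is reachable from the initial state and no two distinct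
states accept the same residual language. -/
def IsMinimal {α σ : Type*} (D : DFA α σ) : Prop :=
  (∀ q : σ, ∃ w : List α, D.evalFrom D.start w = q) ∧
    ∀ q q' : σ, D.acceptsFrom q = D.acceptsFrom q' → q = q'

lemma restrict_eval {α σ : Type*} (D : DFA α σ) (q : reach D) (w : List α) :
    ((restrictReach D).evalFrom q w).1 = D.evalFrom q.1 w := by
  induction w generalizing q with
  | nil => rfl
  | cons a w ih => exact ih _

lemma rev_eval {α σ : Type*} (A : DFA α σ) (S : Set σ) (w : List α) :
    (dfaRev A).toDFA.evalFrom S w = {q | A.evalFrom q w.reverse ∈ S} := by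
  induction w generalizing S with
  | nil => simp [DFA.evalFrom]
  | cons a w ih =>
    show (dfaRev A).toDFA.evalFrom ((dfaRev A).stepSet S a) w = _
    rw [ih]
    ext q
    simp [NFA.stepSet, dfaRev, DFA.evalFrom_append_singleton]

/-- Determinizing a reversed DFA yields a minimal DFA after removing unreachable states:
if all states of the DFA `A` are reachable, then the subset construction applied to
`reverse(A)`, restricted to subsets reachable from the initial subset `Acc(A)`, is the
minimal DFA for the reverse language `L(A)^R`. -/
theorem determinize_reverse_minimal {α σ : Type*} (A : DFA α σ)
    (hA : ∀ q : σ, ∃ w : List α, A.evalFrom A.start w = q) :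
    IsMinimal (restrictReach (dfaRev A).toDFA) ∧
      (restrictReach (dfaRev A).toDFA).accepts = List.reverse '' A.accepts := by
  have hacc : ∀ (S : Set σ) (w : List α),
      w ∈ (dfaRev A).toDFA.acceptsFrom S ↔ A.evalFrom A.start w.reverse ∈ S := by
    intro S w
    rw [DFA.mem_acceptsFrom, rev_eval]
    constructor
    · rintro ⟨s, hs, rfl⟩; exact hs
    · intro h; exact ⟨A.start, h, rfl⟩
  constructor
  · constructor
    · rintro ⟨S, w, hw⟩
      exact ⟨w, Subtype.ext (by rw [restrict_eval]; exact hw)⟩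
    · rintro ⟨S, hS⟩ ⟨S', hS'⟩ h
      have key : ∀ (T : reach (dfaRev A).toDFA) (w : List α),
          w ∈ (restrictReach (dfaRev A).toDFA).acceptsFrom T ↔
            A.evalFrom A.start w.reverse ∈ T.1 := by
        intro T w
        rw [DFA.mem_acceptsFrom]
        show ((restrictReach _).evalFrom T w).1 ∈ (dfaRev A).toDFA.accept ↔ _
        rw [restrict_eval]
        exact hacc T.1 w
      refine Subtype.ext (Set.ext fun q => ?_)
      obtain ⟨w, hw⟩ := hA q
      have h1 := key ⟨S, hS⟩ w.reverse
      have h2 := key ⟨S', hS'⟩ w.reverse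
      rw [List.reverse_reverse, hw] at h1 h2
      rw [← h1, ← h2, h]
  · ext w
    have h1 : w ∈ (restrictReach (dfaRev A).toDFA).accepts ↔
        w ∈ (dfaRev A).toDFA.acceptsFrom A.accept := by
      rw [DFA.mem_accepts, DFA.mem_acceptsFrom]
      show ((restrictReach _).evalFrom _ w).1 ∈ (dfaRev A).toDFA.accept ↔ _
      rw [restrict_eval]
      rfl
    rw [h1, hacc]
    constructor
    · intro h
      exact ⟨w.reverse, h, List.reverse_reverse w⟩
    · rintro ⟨x, hx, rfl⟩
      rwa [List.reverse_reverse]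
end

section
/- Brzozowski's theorem: for any NFA N, the automaton N' = [reachable ∘ determinize ∘ reverse]²(N), obtained by twice applying reversal, subset-construction determinization, and removal of states unreachable from the initial states, is the minimal DFA accepting the same language as N. -/
/-- The reversal of an NFA: swap initial and accepting states and reverse all transitions. -/
def nfaRev {α σ : Type*} (N : NFA α σ) : NFA α σ where
  step s a := {s' | s ∈ N.step s' a}
  start := N.accept
  accept := N.start

section Aux

variable {α σ : Type*}

lemma restrictReach_evalFrom (D : DFA α σ) (q : reach D) (w : List α) :
    ((restrictReach D).evalFrom q w).1 = D.evalFrom q.1 w := by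
  induction w generalizing q with
  | nil => rfl
  | cons a w ih => exact ih ((restrictReach D).step q a)

lemma restrictReach_reachable (D : DFA α σ) (q : reach D) :
    ∃ w : List α, (restrictReach D).evalFrom (restrictReach D).start w = q := by
  obtain ⟨w, hw⟩ := q.2
  exact ⟨w, Subtype.ext (by rw [restrictReach_evalFrom]; exact hw)⟩

lemma restrictReach_acceptsFrom (D : DFA α σ) (q : reach D) :
    (restrictReach D).acceptsFrom q = D.acceptsFrom q.1 := by
  ext w
  rw [DFA.mem_acceptsFrom, DFA.mem_acceptsFrom]
  constructor
  · intro h; rw [← restrictReach_evalFrom]; exact h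
  · intro h; show ((restrictReach D).evalFrom q w).1 ∈ D.accept
    rw [restrictReach_evalFrom]; exact h

lemma restrictReach_accepts (D : DFA α σ) :
    (restrictReach D).accepts = D.accepts := by
  rw [DFA.accepts, restrictReach_acceptsFrom]; rfl

lemma dfaRev_mem_evalFrom (A : DFA α σ) (w : List α) (S : Set σ) (q : σ) :
    q ∈ (dfaRev A).evalFrom S w ↔ A.evalFrom q w.reverse ∈ S := by
  induction w generalizing S with
  | nil => simp [NFA.evalFrom_nil]
  | cons a w ih =>
    show q ∈ (dfaRev A).evalFrom ((dfaRev A).stepSet S a) w ↔ _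
    rw [ih, List.reverse_cons, DFA.evalFrom_append_singleton, NFA.mem_stepSet]
    constructor
    · rintro ⟨t, ht, h⟩
      exact h ▸ ht
    · intro h
      exact ⟨_, h, rfl⟩

lemma nfaRev_mem_evalFrom (M : NFA α σ) (w : List α) (S : Set σ) (q : σ) :
    q ∈ (nfaRev M).evalFrom S w ↔ ∃ s ∈ S, s ∈ M.evalFrom {q} w.reverse := by
  induction w generalizing S with
  | nil => simp [NFA.evalFrom_nil]
  | cons a w ih =>
    show q ∈ (nfaRev M).evalFrom ((nfaRev M).stepSet S a) w ↔ _
    rw [ih, List.reverse_cons]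
    simp only [NFA.mem_stepSet, NFA.evalFrom_append, NFA.evalFrom_singleton, nfaRev, Set.mem_setOf_eq]
    tauto

lemma nfa_mem_evalFrom_iff (M : NFA α σ) (u : List α) (S : Set σ) (t : σ) :
    t ∈ M.evalFrom S u ↔ ∃ s ∈ S, t ∈ M.evalFrom {s} u := by
  induction u generalizing S with
  | nil => simp [NFA.evalFrom_nil]
  | cons a u ih =>
    show t ∈ M.evalFrom (M.stepSet S a) u ↔ ∃ s ∈ S, t ∈ M.evalFrom (M.stepSet {s} a) u
    rw [ih]
    constructor
    · rintro ⟨p, hp, h⟩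
      rw [NFA.mem_stepSet] at hp
      obtain ⟨s, hs, hps⟩ := hp
      refine ⟨s, hs, ?_⟩
      rw [ih]
      exact ⟨p, by rw [NFA.mem_stepSet]; exact ⟨s, rfl, hps⟩, h⟩
    · rintro ⟨s, hs, h⟩
      rw [ih] at h
      obtain ⟨p, hp, h⟩ := h
      rw [NFA.mem_stepSet] at hp
      obtain ⟨s', hs', hps⟩ := hp
      exact ⟨p, by rw [NFA.mem_stepSet]; exact ⟨s, hs, by rwa [Set.mem_singleton_iff.mp hs'] at hps⟩, h⟩

lemma nfaRev_accepts (M : NFA α σ) (w : List α) :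
    w ∈ (nfaRev M).accepts ↔ w.reverse ∈ M.accepts := by
  rw [NFA.mem_accepts, NFA.mem_accepts]
  show (∃ s ∈ M.start, s ∈ (nfaRev M).evalFrom M.accept w) ↔
    ∃ t ∈ M.accept, t ∈ M.evalFrom M.start w.reverse
  constructor
  · rintro ⟨s, hs, h⟩
    rw [nfaRev_mem_evalFrom] at h
    obtain ⟨t, ht, h⟩ := h
    refine ⟨t, ht, ?_⟩
    rw [nfa_mem_evalFrom_iff]
    exact ⟨s, hs, h⟩
  · rintro ⟨t, ht, h⟩
    rw [nfa_mem_evalFrom_iff] at h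
    obtain ⟨s, hs, h⟩ := h
    refine ⟨s, hs, ?_⟩
    rw [nfaRev_mem_evalFrom]
    exact ⟨t, ht, h⟩

lemma dfaRev_accepts (A : DFA α σ) (w : List α) :
    w ∈ (dfaRev A).accepts ↔ w.reverse ∈ A.accepts := by
  rw [NFA.mem_accepts]
  show (∃ s ∈ ({A.start} : Set σ), s ∈ (dfaRev A).evalFrom A.accept w) ↔ _
  simp only [Set.mem_singleton_iff, exists_eq_left]
  rw [dfaRev_mem_evalFrom]
  rfl

lemma dfaRev_toDFA_acceptsFrom (A : DFA α σ) (S : Set σ) (w : List α) :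
    w ∈ (dfaRev A).toDFA.acceptsFrom S ↔ A.evalFrom A.start w.reverse ∈ S := by
  rw [DFA.mem_acceptsFrom]
  show ((dfaRev A).evalFrom S w ∈ {T | ∃ s ∈ T, s ∈ (dfaRev A).accept}) ↔ _
  simp only [Set.mem_setOf_eq]
  show (∃ s ∈ (dfaRev A).evalFrom S w, s ∈ ({A.start} : Set σ)) ↔ _
  simp only [Set.mem_singleton_iff, exists_eq_right]
  exact dfaRev_mem_evalFrom A w S A.start

end Aux

/-- Brzozowski's theorem: for any NFA `N`, the automaton obtained by twice applying reversal,
subset-construction determinization, and removal of states unreachable from the initial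
state(s), i.e. `N' = [reachable ∘ determinize ∘ reverse]²(N)`, is the minimal DFA accepting
the same language as `N`. -/
theorem brzozowski {α σ : Type*} (N : NFA α σ) :
    IsMinimal (restrictReach (dfaRev (restrictReach (nfaRev N).toDFA)).toDFA) ∧
      (restrictReach (dfaRev (restrictReach (nfaRev N).toDFA)).toDFA).accepts = N.accepts := by
  set A := restrictReach (nfaRev N).toDFA with hA
  set B := (dfaRev A).toDFA with hB
  constructor
  · constructor
    · exact restrictReach_reachable B
    · intro q q' h
      rw [restrictReach_acceptsFrom, restrictReach_acceptsFrom] at h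
      apply Subtype.ext
      ext p
      obtain ⟨w, hw⟩ := restrictReach_reachable (nfaRev N).toDFA p
      have hw' : A.evalFrom A.start w.reverse.reverse ∈ q.1 ↔
          A.evalFrom A.start w.reverse.reverse ∈ q'.1 := by
        constructor
        · intro hm
          have : w.reverse ∈ B.acceptsFrom q.1 := (dfaRev_toDFA_acceptsFrom A q.1 w.reverse).2 hm
          rw [h] at this
          exact (dfaRev_toDFA_acceptsFrom A q'.1 w.reverse).1 this
        · intro hm
          have : w.reverse ∈ B.acceptsFrom q'.1 := (dfaRev_toDFA_acceptsFrom A q'.1 w.reverse).2 hm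
          rw [← h] at this
          exact (dfaRev_toDFA_acceptsFrom A q.1 w.reverse).1 this
      rw [List.reverse_reverse, hw] at hw'
      exact hw'
  · ext w
    rw [restrictReach_accepts, hB, NFA.toDFA_correct, dfaRev_accepts, hA, restrictReach_accepts,
      NFA.toDFA_correct, nfaRev_accepts, List.reverse_reverse]
end

section
/- A deterministic finite automaton in which every state is reachable and no two distinct states have equal residual languages has the minimum number of states among all DFAs recognizing its language. -/
lemma acceptsFrom_evalFrom_start {α σ : Type*} (D : DFA α σ) (w : List α) :
    D.acceptsFrom (D.evalFrom D.start w) = {x | (w ++ x) ∈ D.accepts} := by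
  ext x
  simp [DFA.mem_acceptsFrom, DFA.mem_accepts, DFA.evalFrom_of_append, DFA.eval]; exact Iff.rfl

/-- A deterministic finite automaton in which every state is reachable and no two distinct
states have equal residual languages has the minimum number of states among all DFAs
recognizing its language. -/
theorem minimal_has_fewest_states {α : Type*} {σ σ' : Type*} [Fintype σ] [Fintype σ']
    (D : DFA α σ) (hD : IsMinimal D) (D' : DFA α σ') (h : D'.accepts = D.accepts) :
    Fintype.card σ ≤ Fintype.card σ' := by
  obtain ⟨hreach, hsep⟩ := hD
  choose w hw using hreach
  apply Fintype.card_le_of_injective (fun q => D'.evalFrom D'.start (w q))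
  intro q q' hqq'
  apply hsep
  rw [← hw q, ← hw q', acceptsFrom_evalFrom_start, acceptsFrom_evalFrom_start, ← h]
  have := congrArg D'.acceptsFrom hqq'
  rw [acceptsFrom_evalFrom_start, acceptsFrom_evalFrom_start] at this
  exact this
end

section
/- Any two minimal DFAs recognizing the same language are isomorphic: there is a bijection between their states preserving the initial state, transitions, and acceptance. -/
lemma acceptsFrom_eval_eq {α σ₁ σ₂ : Type*} (D₁ : DFA α σ₁) (D₂ : DFA α σ₂)
    (h : D₁.accepts = D₂.accepts) (w : List α) :
    D₁.acceptsFrom (D₁.evalFrom D₁.start w) = D₂.acceptsFrom (D₂.evalFrom D₂.start w) := by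
  ext x
  have := Set.ext_iff.mp h (w ++ x)
  change D₁.eval (w ++ x) ∈ D₁.accept ↔ D₂.eval (w ++ x) ∈ D₂.accept at this
  simp only [DFA.eval, DFA.evalFrom_of_append] at this
  rw [DFA.mem_acceptsFrom, DFA.mem_acceptsFrom]
  exact this

/-- Any two minimal DFAs recognizing the same language are isomorphic: there is a bijection
between their states preserving the initial state, transitions, and acceptance. -/
theorem minimal_dfa_unique_up_to_iso {α σ₁ σ₂ : Type*}
    (D₁ : DFA α σ₁) (D₂ : DFA α σ₂) (h₁ : IsMinimal D₁) (h₂ : IsMinimal D₂)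
    (h : D₁.accepts = D₂.accepts) :
    ∃ f : σ₁ ≃ σ₂, f D₁.start = D₂.start ∧
      (∀ (s : σ₁) (a : α), f (D₁.step s a) = D₂.step (f s) a) ∧
      (∀ s : σ₁, s ∈ D₁.accept ↔ f s ∈ D₂.accept) := by
  classical
  -- word representing each state
  choose w₁ hw₁ using h₁.1
  choose w₂ hw₂ using h₂.1
  -- key: states with same represented word behave alike
  have key : ∀ u v : List α, D₁.evalFrom D₁.start u = D₁.evalFrom D₁.start v ↔
      D₂.evalFrom D₂.start u = D₂.evalFrom D₂.start v := by
    intro u v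
    constructor
    · intro hu
      apply h₂.2
      rw [← acceptsFrom_eval_eq D₁ D₂ h u, ← acceptsFrom_eval_eq D₁ D₂ h v, hu]
    · intro hu
      apply h₁.2
      rw [acceptsFrom_eval_eq D₁ D₂ h u, acceptsFrom_eval_eq D₁ D₂ h v, hu]
  let f : σ₁ → σ₂ := fun q => D₂.evalFrom D₂.start (w₁ q)
  let g : σ₂ → σ₁ := fun q => D₁.evalFrom D₁.start (w₂ q)
  have hfw : ∀ u : List α, f (D₁.evalFrom D₁.start u) = D₂.evalFrom D₂.start u := by
    intro u
    exact ((key (w₁ (D₁.evalFrom D₁.start u)) u).mp (hw₁ _))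
  have hgw : ∀ u : List α, g (D₂.evalFrom D₂.start u) = D₁.evalFrom D₁.start u := by
    intro u
    exact (key (w₂ (D₂.evalFrom D₂.start u)) u).mpr (hw₂ _)
  have hgf : Function.LeftInverse g f := by
    intro q
    have := hgw (w₁ q)
    rw [hw₁] at this
    exact this
  have hfg : Function.RightInverse g f := by
    intro q
    have := hfw (w₂ q)
    rw [hw₂] at this
    exact this
  refine ⟨⟨f, g, hgf, hfg⟩, ?_, ?_, ?_⟩
  · have := hfw []
    simpa [DFA.evalFrom] using this
  · intro s a
    have := hfw (w₁ s ++ [a])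
    rw [DFA.evalFrom_append_singleton, DFA.evalFrom_append_singleton, hw₁] at this
    show f (D₁.step s a) = D₂.step (f s) a
    exact this
  · intro s
    have := Set.ext_iff.mp (acceptsFrom_eval_eq D₁ D₂ h (w₁ s)) []
    rw [hw₁] at this
    exact this
end

section
/- In the subset construction applied to the codeterministic reversal of a DFA A (with accepting states Acc of A as the initial subset), any two distinct reachable subsets T₁ ≠ T₂ have distinct residual languages; i.e., the reachable part of determinize(reverse(A)) already has pairwise distinct residual languages. -/
lemma dfaRev_evalFrom {α σ : Type*} (A : DFA α σ) (w : List α) (T : Set σ) :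
    (dfaRev A).toDFA.evalFrom T w = {s | A.evalFrom s w.reverse ∈ T} := by
  induction w generalizing T with
  | nil => simp [DFA.evalFrom]
  | cons a w ih =>
      rw [DFA.evalFrom, List.foldl_cons, ← DFA.evalFrom, ih]
      ext s
      simp only [Set.mem_setOf_eq, List.reverse_cons, DFA.evalFrom_append_singleton]
      constructor
      · rintro h
        simp only [NFA.toDFA, NFA.stepSet, dfaRev, Set.mem_iUnion, Set.mem_setOf_eq] at h
        obtain ⟨t, ht, h⟩ := h
        rwa [h]
      · intro h
        simp only [NFA.toDFA, NFA.stepSet, dfaRev, Set.mem_iUnion, Set.mem_setOf_eq]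
        exact ⟨_, h, rfl⟩

lemma dfaRev_acceptsFrom {α σ : Type*} (A : DFA α σ) (w : List α) (T : Set σ) :
    w ∈ (dfaRev A).toDFA.acceptsFrom T ↔ A.evalFrom A.start w.reverse ∈ T := by
  rw [DFA.mem_acceptsFrom, dfaRev_evalFrom]
  simp [NFA.toDFA, dfaRev]

/-- In the subset construction applied to the codeterministic reversal of a DFA `A` all of
whose states are reachable (with `Acc(A)` as the initial subset), any two distinct reachable
subsets `T₁ ≠ T₂` have distinct residual languages. -/
theorem determinize_reverse_distinguishable {α σ : Type*} (A : DFA α σ)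
    (hA : ∀ q : σ, ∃ w : List α, A.evalFrom A.start w = q) :
    ∀ T₁ T₂ : Set σ,
      (∃ w : List α, (dfaRev A).toDFA.evalFrom (dfaRev A).toDFA.start w = T₁) →
      (∃ w : List α, (dfaRev A).toDFA.evalFrom (dfaRev A).toDFA.start w = T₂) →
      T₁ ≠ T₂ →
      (dfaRev A).toDFA.acceptsFrom T₁ ≠ (dfaRev A).toDFA.acceptsFrom T₂ := by
  intro T₁ T₂ _ _ hne hacc
  apply hne
  ext q
  obtain ⟨w, hw⟩ := hA q
  have h1 := dfaRev_acceptsFrom A w.reverse T₁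
  have h2 := dfaRev_acceptsFrom A w.reverse T₂
  rw [List.reverse_reverse, hw] at h1 h2
  rw [← h1, ← h2, hacc]
end
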